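/- Let E and F be metric spaces equipped with their Borel σ-algebras and let H : E → F be a mapping. Suppose there exist closed sets D_k ⊆ E for k ≥ 1 such that D_k ⊆ D_{k+1}, ⋃_{k≥1} D_k = E, and the restriction of H to every D_k is continuous. Suppose X_n are E-valued random variables with lim_{k→∞} sup_n P(X_n ∉ D_k) = 0, and that X_n → X in distribution in E as n → ∞, where X is an E-valued random variable. Then H(X_n) → H(X) in distribution in F as n → ∞. -/

import Mathlib

open MeasureTheory Filter Topology

/-- Continuous mapping theorem for maps continuous on an increasing
exhaustion by closed sets, with uniform control on the probability of escaping the sets. -/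
theorem stmt0
    {E F Ω : Type*} [MetricSpace E] [MetricSpace F]
    [MeasurableSpace E] [BorelSpace E] [MeasurableSpace F] [BorelSpace F]
    [MeasurableSpace Ω] (P : Measure Ω) [IsProbabilityMeasure P]
    (H : E → F) (D : ℕ → Set E)
    (hclosed : ∀ k, IsClosed (D k))
    (hmono : ∀ k, D k ⊆ D (k + 1))
    (hunion : (⋃ k, D k) = Set.univ)
    (hcont : ∀ k, ContinuousOn H (D k))
    (X : ℕ → Ω → E) (X₀ : Ω → E)
    (hX : ∀ n, Measurable (X n)) (hX₀ : Measurable X₀)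
    (htight : Tendsto (fun k => ⨆ n, P {ω | X n ω ∉ D k}) atTop (𝓝 0))
    (hconv : ∀ f : BoundedContinuousFunction E ℝ,
      Tendsto (fun n => ∫ ω, f (X n ω) ∂P) atTop (𝓝 (∫ ω, f (X₀ ω) ∂P))) :
    ∀ g : BoundedContinuousFunction F ℝ,
      Tendsto (fun n => ∫ ω, g (H (X n ω)) ∂P) atTop (𝓝 (∫ ω, g (H (X₀ ω)) ∂P)) := by
  intro g
  set M := ‖g‖ with hM
  have hM0 : 0 ≤ M := norm_nonneg g
  have hDmono : Monotone D := monotone_nat_of_le_succ hmono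
  -- H is measurable
  have hHmeas : Measurable H := by
    apply measurable_of_isOpen
    intro U hU
    have hcover : H ⁻¹' U = ⋃ k, H ⁻¹' U ∩ D k := by
      rw [← Set.inter_iUnion, hunion, Set.inter_univ]
    rw [hcover]
    refine MeasurableSet.iUnion fun k => ?_
    obtain ⟨u, hu, heq⟩ := (continuousOn_iff'.mp (hcont k)) U hU
    rw [heq]
    exact hu.measurableSet.inter (hclosed k).measurableSet
  -- the tail probability for X₀ tends to 0
  have hX₀tail : Tendsto (fun k => P {ω | X₀ ω ∉ D k}) atTop (𝓝 0) := by
    have h := tendsto_measure_iInter_atTop (μ := P)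
      (s := fun k => {ω | X₀ ω ∉ D k})
      (fun k => ((hX₀ (hclosed k).measurableSet.compl)).nullMeasurableSet)
      (fun i j hij => fun ω hω hmem => hω (hDmono hij hmem))
      ⟨0, measure_ne_top P _⟩
    have hempty : (⋂ k, {ω | X₀ ω ∉ D k}) = ∅ := by
      ext ω
      simp only [Set.mem_iInter, Set.mem_setOf_eq, Set.mem_empty_iff_false, iff_false, not_forall,
        not_not]
      have : X₀ ω ∈ ⋃ k, D k := by rw [hunion]; trivial
      simpa using this
    rw [hempty, measure_empty] at h
    exact h
  rw [Metric.tendsto_atTop]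
  intro ε hε
  set ε' : ℝ := ε / (6 * (M + 1)) with hε'
  have hε'pos : 0 < ε' := by positivity
  -- choose k large enough
  obtain ⟨k₁, hk₁⟩ := (htight.eventually_lt_const (by simp [hε'pos] : (0:ENNReal) < ENNReal.ofReal ε')).exists
  obtain ⟨k₂, hk₂⟩ := (hX₀tail.eventually_lt_const (by simp [hε'pos] : (0:ENNReal) < ENNReal.ofReal ε')).exists
  set k := max k₁ k₂ with hk
  have htail_n : ∀ n, P {ω | X n ω ∉ D k} ≤ ENNReal.ofReal ε' := by
    intro n
    refine le_trans (measure_mono fun ω hω hmem => hω (hDmono (le_max_left k₁ k₂) hmem)) ?_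
    exact le_trans (le_iSup (fun n => P {ω | X n ω ∉ D k₁}) n) hk₁.le
  have htail_0 : P {ω | X₀ ω ∉ D k} ≤ ENNReal.ofReal ε' := by
    refine le_trans (measure_mono fun ω hω hmem => hω (hDmono (le_max_right k₁ k₂) hmem)) ?_
    exact hk₂.le
  -- Tietze extension of g ∘ H from D k
  set c : C((D k : Set E), F) := ⟨(D k).restrict H, (hcont k).restrict⟩ with hc
  obtain ⟨f, hfnorm, hfres⟩ :=
    BoundedContinuousFunction.exists_norm_eq_restrict_eq_of_closed
      (g.compContinuous c) (hclosed k)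
  have hagree : ∀ x ∈ D k, f x = g (H x) := by
    intro x hx
    have := congrFun (congrArg DFunLike.coe hfres) ⟨x, hx⟩
    exact this
  have hfbound : ∀ x, |f x| ≤ M := by
    intro x
    calc |f x| ≤ ‖f‖ := f.norm_coe_le_norm x
      _ = ‖g.compContinuous c‖ := hfnorm
      _ ≤ M := g.norm_compContinuous_le c
  -- the key estimate
  have key : ∀ Y : Ω → E, Measurable Y → P {ω | Y ω ∉ D k} ≤ ENNReal.ofReal ε' →
      |∫ ω, g (H (Y ω)) ∂P - ∫ ω, f (Y ω) ∂P| ≤ 2 * M * ε' := by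
    intro Y hY hPY
    have hA : MeasurableSet {ω | Y ω ∉ D k} := hY (hclosed k).measurableSet.compl
    have hmeas1 : Measurable fun ω => g (H (Y ω)) :=
      g.continuous.measurable.comp (hHmeas.comp hY)
    have hint1 : Integrable (fun ω => g (H (Y ω))) P :=
      ⟨hmeas1.aestronglyMeasurable,
        HasFiniteIntegral.of_bounded (C := M)
          (ae_of_all _ fun ω => g.norm_coe_le_norm _)⟩
    have hint2 : Integrable (fun ω => f (Y ω)) P :=
      ⟨(f.continuous.measurable.comp hY).aestronglyMeasurable,
        HasFiniteIntegral.of_bounded (C := M)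
          (ae_of_all _ fun ω => by simpa using hfbound (Y ω))⟩
    rw [← integral_sub hint1 hint2]
    have hzero : ∀ ω, ω ∉ {ω | Y ω ∉ D k} → g (H (Y ω)) - f (Y ω) = 0 := by
      intro ω hω
      simp only [Set.mem_setOf_eq, not_not] at hω
      rw [hagree _ hω]; ring
    rw [← setIntegral_eq_integral_of_forall_compl_eq_zero hzero]
    have hbound : ∀ ω ∈ {ω | Y ω ∉ D k}, ‖g (H (Y ω)) - f (Y ω)‖ ≤ 2 * M := by
      intro ω _
      calc ‖g (H (Y ω)) - f (Y ω)‖ ≤ ‖g (H (Y ω))‖ + ‖f (Y ω)‖ := norm_sub_le _ _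
        _ ≤ M + M := add_le_add (g.norm_coe_le_norm _) (by simpa using hfbound (Y ω))
        _ = 2 * M := by ring
    calc |∫ ω in {ω | Y ω ∉ D k}, (g (H (Y ω)) - f (Y ω)) ∂P|
        ≤ 2 * M * (P {ω | Y ω ∉ D k}).toReal :=
          norm_setIntegral_le_of_norm_le_const (measure_lt_top P _) hbound
      _ ≤ 2 * M * ε' := by
          have : (P {ω | Y ω ∉ D k}).toReal ≤ ε' :=
            ENNReal.toReal_le_of_le_ofReal hε'pos.le hPY
          nlinarith
  -- convergence of the middle term
  have hmid := Metric.tendsto_atTop.mp (hconv f) (ε / 3) (by positivity)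
  obtain ⟨N, hN⟩ := hmid
  refine ⟨N, fun n hn => ?_⟩
  have h1 := key (X n) (hX n) (htail_n n)
  have h3 := key X₀ hX₀ htail_0
  have h2 := hN n hn
  rw [Real.dist_eq] at h2 ⊢
  have h2Mε' : 2 * M * ε' ≤ ε / 3 := by
    have he : ε' * (6 * (M + 1)) = ε := by
      rw [hε']; field_simp
    have he3 : ε / 3 = 2 * ε' * (M + 1) := by rw [← he]; ring
    nlinarith [hε'pos]
  calc |∫ ω, g (H (X n ω)) ∂P - ∫ ω, g (H (X₀ ω)) ∂P|
      ≤ |∫ ω, g (H (X n ω)) ∂P - ∫ ω, f (X n ω) ∂P|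
        + |∫ ω, f (X n ω) ∂P - ∫ ω, f (X₀ ω) ∂P|
        + |∫ ω, f (X₀ ω) ∂P - ∫ ω, g (H (X₀ ω)) ∂P| := by
          have := abs_sub_le (∫ ω, g (H (X n ω)) ∂P) (∫ ω, f (X n ω) ∂P) (∫ ω, g (H (X₀ ω)) ∂P)
          have h' := abs_sub_le (∫ ω, f (X n ω) ∂P) (∫ ω, f (X₀ ω) ∂P) (∫ ω, g (H (X₀ ω)) ∂P)
          linarith
    _ < ε / 3 + ε / 3 + ε / 3 := by
        have h3' : |∫ ω, f (X₀ ω) ∂P - ∫ ω, g (H (X₀ ω)) ∂P| ≤ 2 * M * ε' := by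
          rw [abs_sub_comm]; exact h3
        linarith [lt_of_le_of_lt (le_trans h1 h2Mε') (by linarith : ε / 3 < ε / 3 + 1)]
    _ = ε := by ring
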